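/- arXiv:2510.20789 — 2 statements merged into one kernel-verified Lean document; each statement's English description precedes it below -/
import Mathlib

section
/- Let k, n, d be positive integers with k ≤ n. An indexed list of (possibly subnormalized) pure quantum states ψ_1, …, ψ_n ∈ ℂ^d is k-learnable if and only if its Gram matrix G (with G_{ij} = ⟨ψ_i, ψ_j⟩) is k-incoherent. -/
open Matrix BigOperators Finset ComplexOrder

noncomputable section

/-- The number of nonzero entries of a vector in `ℂ^n`. -/
def suppCard {n : ℕ} (v : Fin n → ℂ) : ℕ :=
  (Finset.univ.filter fun i => v i ≠ 0).card

/-- A matrix `X` is `k`-incoherent if it can be written as `∑ vᵢ vᵢ*` where each `vᵢ`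
has at most `k` nonzero entries. -/
def KIncoherent {n : ℕ} (k : ℕ) (X : Matrix (Fin n) (Fin n) ℂ) : Prop :=
  ∃ (m : ℕ) (v : Fin m → (Fin n → ℂ)),
    (∀ i, suppCard (v i) ≤ k) ∧ X = ∑ i, vecMulVec (v i) (star (v i))

/-- The set `I_k` of positive semidefinite, `k`-incoherent matrices with trace at most `1`. -/
def Ik (n k : ℕ) : Set (Matrix (Fin n) (Fin n) ℂ) :=
  {X | X.PosSemidef ∧ KIncoherent k X ∧ X.trace.re ≤ 1}

/-- The Gram matrix of a list of vectors in `ℂ^d`. -/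
def gramMatrix {n d : ℕ} (ψ : Fin n → (Fin d → ℂ)) : Matrix (Fin n) (Fin n) ℂ :=
  Matrix.of fun i j => star (ψ i) ⬝ᵥ ψ j

/-- A list of states `ψ₁, …, ψₙ` is `k`-learnable if there is a POVM indexed by the
`k`-element subsets of `{1, …, n}` such that `⟨ψᵢ, M_S ψᵢ⟩ = 0` whenever `i ∉ S`. -/
def KLearnable {n d : ℕ} (k : ℕ) (ψ : Fin n → (Fin d → ℂ)) : Prop :=
  ∃ M : {S : Finset (Fin n) // S.card = k} → Matrix (Fin d) (Fin d) ℂ,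
    (∀ S, (M S).PosSemidef) ∧ (∑ S, M S) = 1 ∧
    ∀ (S : {S : Finset (Fin n) // S.card = k}) (i : Fin n),
      i ∉ S.val → star (ψ i) ⬝ᵥ ((M S) *ᵥ ψ i) = 0

/-- The Frobenius norm of a square complex matrix. -/
def frobNorm {m : ℕ} (A : Matrix (Fin m) (Fin m) ℂ) : ℝ :=
  Real.sqrt (∑ i, ∑ j, ‖A i j‖ ^ 2)


lemma sum_vecMulVec_star {p q : ℕ} (B : Matrix (Fin p) (Fin q) ℂ) :
    ∑ r, vecMulVec (star (B r)) (B r) = Bᴴ * B := by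
  ext i j
  simp [Matrix.sum_apply, vecMulVec_apply, Matrix.mul_apply, Matrix.conjTranspose_apply]

lemma vecMulVec_mulVec {p q : ℕ} (u : Fin p → ℂ) (b : Fin q → ℂ) (x : Fin q → ℂ) :
    vecMulVec u b *ᵥ x = (b ⬝ᵥ x) • u := by
  ext a
  simp [mulVec, vecMulVec_apply, dotProduct, Finset.mul_sum, mul_comm, mul_assoc, mul_left_comm]

lemma vecMulVec_posSemidef {p : ℕ} (w : Fin p → ℂ) :
    (vecMulVec w (star w)).PosSemidef := by
  rw [posSemidef_iff_dotProduct_mulVec]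
  constructor
  · ext i j
    simp [vecMulVec_apply, Matrix.conjTranspose_apply, mul_comm]
  · intro x
    rw [vecMulVec_mulVec, dotProduct_smul]
    have h1 : star x ⬝ᵥ w = star (star w ⬝ᵥ x) := by
      simp [dotProduct, mul_comm]
    rw [smul_eq_mul, h1]
    exact mul_star_self_nonneg _

lemma conj_dot_eq {n d : ℕ} (Ψ : Matrix (Fin d) (Fin n) ℂ) (A : Matrix (Fin d) (Fin d) ℂ)
    (i j : Fin n) :
    star (fun a => Ψ a i) ⬝ᵥ (A *ᵥ (fun a => Ψ a j)) = (Ψᴴ * A * Ψ) i j := by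
  simp only [dotProduct, mulVec, Matrix.mul_apply, Matrix.conjTranspose_apply, Pi.star_apply,
    Finset.mul_sum, Finset.sum_mul]
  rw [Finset.sum_comm]
  exact Finset.sum_congr rfl fun c _ => Finset.sum_congr rfl fun b _ => by ring

lemma conj_vecMulVec {p q : ℕ} (A : Matrix (Fin p) (Fin q) ℂ) (a : Fin p → ℂ) :
    Aᴴ * vecMulVec a (star a) * A = vecMulVec (Aᴴ *ᵥ a) (star (Aᴴ *ᵥ a)) := by
  ext i j
  simp only [Matrix.mul_apply, vecMulVec_apply, Matrix.conjTranspose_apply, mulVec, dotProduct,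
    Pi.star_apply, Finset.mul_sum, Finset.sum_mul, star_sum, star_mul']
  refine Finset.sum_congr rfl fun c _ => Finset.sum_congr rfl fun b _ => by
    simp [RCLike.star_def]
    ring

lemma posSemidef_sum_vecMulVec {p q : ℕ} (s : Finset (Fin q)) (w : Fin q → Fin p → ℂ) :
    (∑ l ∈ s, vecMulVec (w l) (star (w l))).PosSemidef := by
  classical
  induction s using Finset.induction_on with
  | empty => simpa using Matrix.PosSemidef.zero
  | insert a s h ih =>
    rw [Finset.sum_insert h]
    exact (vecMulVec_posSemidef _).add ih

lemma exists_pinv {q : ℕ} {G : Matrix (Fin q) (Fin q) ℂ} (hG : G.IsHermitian) :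
    ∃ Gp : Matrix (Fin q) (Fin q) ℂ,
      Gpᴴ = Gp ∧ G * Gp * G = G ∧ Gp * G * Gp = Gp ∧ G * Gp = Gp * G := by
  classical
  set U : Matrix (Fin q) (Fin q) ℂ := (hG.eigenvectorUnitary : Matrix (Fin q) (Fin q) ℂ) with hU
  have hUU : star U * U = 1 := Matrix.mem_unitaryGroup_iff'.mp (hG.eigenvectorUnitary).2
  have key : ∀ a b : Fin q → ℂ,
      (U * diagonal a * star U) * (U * diagonal b * star U)
        = U * diagonal (fun i => a i * b i) * star U := by
    intro a b
    calc (U * diagonal a * star U) * (U * diagonal b * star U)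
        = U * diagonal a * (star U * U) * diagonal b * star U := by
          simp only [Matrix.mul_assoc]
      _ = U * (diagonal a * diagonal b) * star U := by
          rw [hUU]; simp only [Matrix.mul_one, Matrix.mul_assoc]
      _ = U * diagonal (fun i => a i * b i) * star U := by rw [diagonal_mul_diagonal]
  set g : Fin q → ℂ := RCLike.ofReal ∘ hG.eigenvalues with hg
  have hspec : G = U * diagonal g * star U := hG.spectral_theorem
  set gp : Fin q → ℂ := fun i => if hG.eigenvalues i = 0 then 0 else (g i)⁻¹ with hgp
  have hgg : (fun i => (fun i => g i * gp i) i * g i) = g := by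
    funext i
    by_cases h : hG.eigenvalues i = 0
    · simp [hgp, hg, h]
    · have hne : g i ≠ 0 := by simp [hg, h]
      field_simp [hgp, h]
      rw [show gp i = (g i)⁻¹ by simp [hgp, h]]
      field_simp
  have hpgp : (fun i => (fun i => gp i * g i) i * gp i) = gp := by
    funext i
    by_cases h : hG.eigenvalues i = 0
    · simp [hgp, hg, h]
    · have hne : g i ≠ 0 := by simp [hg, h]
      field_simp [hgp, h]
      rw [show gp i = (g i)⁻¹ by simp [hgp, h]]
      field_simp
  have hcomm : (fun i => g i * gp i) = fun i => gp i * g i := by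
    funext i; ring
  refine ⟨U * diagonal gp * star U, ?_, ?_, ?_, ?_⟩
  · have hstar : star gp = gp := by
      funext i
      by_cases h : hG.eigenvalues i = 0 <;>
        simp [hgp, hg, h, RCLike.star_def, ← Complex.ofReal_inv]
    have hdg : (diagonal gp)ᴴ = diagonal gp := by
      rw [diagonal_conjTranspose, hstar]
    simp only [conjTranspose_mul, conjTranspose_conjTranspose, hdg, star_eq_conjTranspose,
      Matrix.mul_assoc]
  · rw [hspec, key, key, hgg]
  · rw [hspec, key, key, hpgp]
  · rw [hspec, key, key, hcomm]

lemma posSemidef_iff_eq_transpose_mul_self {p : ℕ} {A : Matrix (Fin p) (Fin p) ℂ} :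
    A.PosSemidef ↔ ∃ B : Matrix (Fin p) (Fin p) ℂ, A = Bᴴ * B := by
  constructor
  · intro h
    open scoped MatrixOrder Matrix.Norms.L2Operator in
    obtain ⟨B, hB⟩ := CStarAlgebra.nonneg_iff_eq_star_mul_self.mp
      (Matrix.nonneg_iff_posSemidef.mpr h)
    exact ⟨B, hB⟩
  · rintro ⟨B, rfl⟩
    exact posSemidef_conjTranspose_mul_self B

/-- A list of pure states is `k`-learnable if and only if its Gram matrix is `k`-incoherent. -/
theorem kLearnable_iff_gram_kIncoherent (k n d : ℕ) (hk : 0 < k) (hn : 0 < n) (hd : 0 < d)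
    (hkn : k ≤ n) (ψ : Fin n → (Fin d → ℂ)) :
    KLearnable k ψ ↔ KIncoherent k (gramMatrix ψ) := by
  classical
  set Ψ : Matrix (Fin d) (Fin n) ℂ := Matrix.of (fun a i => ψ i a) with hΨdef
  have hGram : gramMatrix ψ = Ψᴴ * Ψ := by
    ext i j
    simp [gramMatrix, Matrix.mul_apply, Matrix.conjTranspose_apply, dotProduct, hΨdef]
  constructor
  · rintro ⟨M, hpsd, hsum, hzero⟩
    choose B hB using fun S => posSemidef_iff_eq_transpose_mul_self.mp (hpsd S)
    set C : {S : Finset (Fin n) // S.card = k} → Matrix (Fin d) (Fin n) ℂ :=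
      fun S => B S * Ψ with hC
    have hCC : ∀ S, (C S)ᴴ * C S = Ψᴴ * M S * Ψ := by
      intro S
      rw [hC]
      rw [conjTranspose_mul, Matrix.mul_assoc, ← Matrix.mul_assoc (B S)ᴴ, ← hB S,
        ← Matrix.mul_assoc]
    have hCzero : ∀ (S : {S : Finset (Fin n) // S.card = k}) (i : Fin n),
        i ∉ S.val → ∀ r, C S r i = 0 := by
      intro S i hi r
      have h0 : ((C S)ᴴ * C S) i i = 0 := by
        rw [hCC S, ← conj_dot_eq]
        exact hzero S i hi
      have h1 : ∑ a, (Complex.normSq (C S a i) : ℂ) = 0 := by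
        rw [← h0]
        simp only [Matrix.mul_apply, Matrix.conjTranspose_apply]
        exact Finset.sum_congr rfl fun a _ => by
          rw [RCLike.star_def, mul_comm, Complex.mul_conj]
      have h2 : ∑ a, Complex.normSq (C S a i) = 0 := by exact_mod_cast h1
      have h3 : ∀ a ∈ Finset.univ, Complex.normSq (C S a i) = 0 := by
        rw [← Finset.sum_eq_zero_iff_of_nonneg fun a _ => Complex.normSq_nonneg _]
        exact h2
      exact Complex.normSq_eq_zero.mp (h3 r (Finset.mem_univ r))
    set u : ({S : Finset (Fin n) // S.card = k} × Fin d) → (Fin n → ℂ) :=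
      fun p => star (C p.1 p.2) with hu
    have hsupp : ∀ p, suppCard (u p) ≤ k := by
      rintro ⟨S, r⟩
      have hsub : (Finset.univ.filter fun i => u (S, r) i ≠ 0) ⊆ S.val := by
        intro i hi
        simp only [Finset.mem_filter, Finset.mem_univ, true_and, hu, Pi.star_apply,
          ne_eq, star_eq_zero] at hi
        by_contra h
        exact hi (hCzero S i h r)
      calc suppCard (u (S, r)) ≤ S.val.card := Finset.card_le_card hsub
        _ = k := S.2
    refine ⟨Fintype.card ({S : Finset (Fin n) // S.card = k} × Fin d),
      u ∘ (Fintype.equivFin ({S : Finset (Fin n) // S.card = k} × Fin d)).symm,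
      fun l => hsupp _, ?_⟩
    have h1 : ∑ i, vecMulVec
          ((u ∘ (Fintype.equivFin ({S : Finset (Fin n) // S.card = k} × Fin d)).symm) i)
          (star ((u ∘ (Fintype.equivFin ({S : Finset (Fin n) // S.card = k} × Fin d)).symm) i))
        = ∑ p, vecMulVec (u p) (star (u p)) :=
      Fintype.sum_equiv (Fintype.equivFin ({S : Finset (Fin n) // S.card = k} × Fin d)).symm _ _
        fun i => rfl
    rw [h1, Fintype.sum_prod_type]
    have hinner : ∀ S, ∑ r : Fin d, vecMulVec (u (S, r)) (star (u (S, r))) = Ψᴴ * M S * Ψ := by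
      intro S
      have : ∀ r : Fin d, vecMulVec (u (S, r)) (star (u (S, r)))
          = vecMulVec (star (C S r)) (C S r) := by
        intro r; rw [hu]; simp only [star_star]
      rw [Finset.sum_congr rfl fun r _ => this r, sum_vecMulVec_star, hCC]
    rw [Finset.sum_congr rfl fun S _ => hinner S]
    have h2 : ∑ S, Ψᴴ * M S * Ψ = Ψᴴ * (∑ S, M S) * Ψ := by
      rw [Matrix.mul_sum, Matrix.sum_mul]
    rw [h2, hsum, Matrix.mul_one, hGram]
  · rintro ⟨m, v, hsupp, hdecomp⟩
    set V : Matrix (Fin n) (Fin m) ℂ := Matrix.of (fun i l => v l i) with hVdef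
    have hVV : gramMatrix ψ = V * Vᴴ := by
      rw [hdecomp]
      ext i j
      simp [Matrix.sum_apply, vecMulVec_apply, Matrix.mul_apply,
        Matrix.conjTranspose_apply, hVdef]
    set G : Matrix (Fin n) (Fin n) ℂ := gramMatrix ψ with hGdef
    have hGherm : G.IsHermitian := by
      rw [hVV]; exact isHermitian_mul_conjTranspose_self V
    obtain ⟨Gp, hGp1, hGp2, hGp3, hGp4⟩ := exists_pinv hGherm
    have hVmul : ∀ {p : ℕ} (X : Matrix (Fin n) (Fin p) ℂ), V * (Vᴴ * X) = G * X := by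
      intro p X
      rw [← Matrix.mul_assoc, ← hVV]
    have hΨmul : ∀ {p : ℕ} (X : Matrix (Fin n) (Fin p) ℂ), Ψᴴ * (Ψ * X) = G * X := by
      intro p X
      rw [← Matrix.mul_assoc, ← hGram]
    have hGpGGp : ∀ {p : ℕ} (X : Matrix (Fin n) (Fin p) ℂ),
        Gp * (G * (Gp * X)) = Gp * X := by
      intro p X
      rw [← Matrix.mul_assoc, ← Matrix.mul_assoc, hGp3]
    have hT : (1 - G * Gp)ᴴ = 1 - G * Gp := by
      rw [conjTranspose_sub, conjTranspose_one, conjTranspose_mul, hGp1, hGherm.eq, hGp4]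
    have hTG : (1 - G * Gp) * G = 0 := by
      rw [Matrix.sub_mul, Matrix.one_mul, hGp2, sub_self]
    have hTV : (1 - G * Gp) * V = 0 := by
      rw [← self_mul_conjTranspose_eq_zero]
      rw [conjTranspose_mul, hT, Matrix.mul_assoc, hVmul, ← Matrix.mul_assoc, hTG,
        Matrix.zero_mul]
    have hGGpV : G * (Gp * V) = V := by
      have h := hTV
      rw [Matrix.sub_mul, Matrix.one_mul, sub_eq_zero] at h
      rw [← Matrix.mul_assoc, ← h]
    set W : Matrix (Fin d) (Fin m) ℂ := Ψ * (Gp * V) with hWdef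
    set P : Matrix (Fin d) (Fin d) ℂ := Ψ * (Gp * Ψᴴ) with hPdef
    have hΨW : Ψᴴ * W = V := by
      rw [hWdef, hΨmul, hGGpV]
    have hWW : W * Wᴴ = P := by
      rw [hWdef, hPdef]
      simp only [conjTranspose_mul, hGp1, Matrix.mul_assoc]
      rw [hVmul, hGpGGp]
    have hPH : Pᴴ = P := by
      rw [hPdef]
      simp only [conjTranspose_mul, hGp1, conjTranspose_conjTranspose, Matrix.mul_assoc]
    have hPP : P * P = P := by
      conv_lhs => rw [hPdef]
      simp only [Matrix.mul_assoc]
      rw [hΨmul, hGpGGp, ← hPdef]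
    have h1P : (1 - P).PosSemidef := by
      refine posSemidef_iff_eq_transpose_mul_self.mpr ⟨1 - P, ?_⟩
      rw [conjTranspose_sub, conjTranspose_one, hPH, Matrix.mul_sub, Matrix.mul_one,
        Matrix.sub_mul, Matrix.one_mul, hPP, sub_self, sub_zero]
    have hPΨ : Ψᴴ * P * Ψ = G := by
      rw [hPdef, hΨmul]
      simp only [Matrix.mul_assoc]
      rw [← hGram]
      rw [← Matrix.mul_assoc, hGp2]
    have hcorr : Ψᴴ * (1 - P) * Ψ = 0 := by
      rw [Matrix.mul_sub, Matrix.sub_mul, Matrix.mul_one, hPΨ, ← hGram, sub_self]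
    -- choose the supports
    have hex : ∀ l : Fin m, ∃ S : Finset (Fin n),
        (Finset.univ.filter fun i => v l i ≠ 0) ⊆ S ∧ S.card = k := by
      intro l
      obtain ⟨S, hS1, _, hS3⟩ := Finset.exists_subsuperset_card_eq
        (Finset.subset_univ (Finset.univ.filter fun i => v l i ≠ 0)) (hsupp l)
        (by simpa using hkn)
      exact ⟨S, hS1, hS3⟩
    choose Sf hSf1 hSf2 using hex
    obtain ⟨t0, _, ht0⟩ := Finset.exists_subset_card_eq
      (show k ≤ (Finset.univ : Finset (Fin n)).card by simpa using hkn)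
    set S₀ : {S : Finset (Fin n) // S.card = k} := ⟨t0, ht0⟩ with hS₀
    set Sfun : Fin m → {S : Finset (Fin n) // S.card = k} := fun l => ⟨Sf l, hSf2 l⟩ with hSfun
    set w : Fin m → (Fin d → ℂ) := fun l a => W a l with hw
    set M : {S : Finset (Fin n) // S.card = k} → Matrix (Fin d) (Fin d) ℂ :=
      fun S => (∑ l ∈ Finset.univ.filter fun l => Sfun l = S,
        vecMulVec (w l) (star (w l))) + (if S = S₀ then 1 - P else 0) with hM
    refine ⟨M, ?_, ?_, ?_⟩
    · intro S
      simp only [hM]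
      refine Matrix.PosSemidef.add (posSemidef_sum_vecMulVec _ _) ?_
      by_cases hS : S = S₀
      · rw [if_pos hS]; exact h1P
      · rw [if_neg hS]; exact Matrix.PosSemidef.zero
    · simp only [hM]
      rw [Finset.sum_add_distrib]
      have hfib : (∑ S : {S : Finset (Fin n) // S.card = k},
          ∑ l ∈ Finset.univ.filter fun l => Sfun l = S, vecMulVec (w l) (star (w l)))
          = ∑ l, vecMulVec (w l) (star (w l)) :=
        Finset.sum_fiberwise Finset.univ Sfun fun l => vecMulVec (w l) (star (w l))
      rw [hfib]
      have hWsum : ∑ l, vecMulVec (w l) (star (w l)) = W * Wᴴ := by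
        have h := sum_vecMulVec_star Wᴴ
        rw [conjTranspose_conjTranspose] at h
        rw [← h]
        refine Finset.sum_congr rfl fun l _ => ?_
        ext a b
        simp [vecMulVec_apply, Matrix.conjTranspose_apply, hw]
      have hite : (∑ S : {S : Finset (Fin n) // S.card = k},
          if S = S₀ then (1 : Matrix (Fin d) (Fin d) ℂ) - P else 0) = 1 - P := by
        simp [Finset.sum_ite_eq']
      rw [hWsum, hWW, hite]
      abel
    · intro S i hi
      have hRl : ∀ l, Ψᴴ * vecMulVec (w l) (star (w l)) * Ψ = vecMulVec (v l) (star (v l)) := by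
        intro l
        rw [conj_vecMulVec]
        have hwv : Ψᴴ *ᵥ w l = v l := by
          funext j
          have h1 : (Ψᴴ *ᵥ w l) j = (Ψᴴ * W) j l := by
            simp [mulVec, Matrix.mul_apply, dotProduct, hw]
          rw [h1, hΨW]
          rfl
        rw [hwv]
      have key : (Ψᴴ * M S * Ψ) i i = 0 := by
        simp only [hM]
        rw [Matrix.mul_add, Matrix.add_mul, Matrix.mul_sum, Matrix.sum_mul]
        rw [Finset.sum_congr rfl fun l _ => hRl l]
        rw [Matrix.add_apply]
        have hA : (∑ l ∈ Finset.univ.filter fun l => Sfun l = S,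
            vecMulVec (v l) (star (v l))) i i = 0 := by
          rw [Matrix.sum_apply]
          refine Finset.sum_eq_zero fun l hl => ?_
          rw [Finset.mem_filter] at hl
          have hvz : v l i = 0 := by
            by_contra hv
            have hmem : i ∈ Sf l := hSf1 l (Finset.mem_filter.mpr ⟨Finset.mem_univ i, hv⟩)
            have hval : Sf l = S.val := congrArg Subtype.val hl.2
            rw [hval] at hmem
            exact hi hmem
          simp [vecMulVec_apply, hvz]
        have hB : (Ψᴴ * (if S = S₀ then (1 : Matrix (Fin d) (Fin d) ℂ) - P else 0) * Ψ) i i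
            = 0 := by
          by_cases hS : S = S₀
          · rw [if_pos hS, hcorr, Matrix.zero_apply]
          · rw [if_neg hS, Matrix.mul_zero, Matrix.zero_mul, Matrix.zero_apply]
        rw [hA, hB, add_zero]
      calc star (ψ i) ⬝ᵥ (M S *ᵥ ψ i) = (Ψᴴ * M S * Ψ) i i := conj_dot_eq Ψ (M S) i i
        _ = 0 := key
end
end

section
/- Let n, k be integers with 2 ≤ k ≤ n, let G be a simple undirected graph on n vertices containing a clique of size k, and let C ∈ ℂ^{n×n} be its adjacency matrix (with C_{ij} = 1 if {i,j} is an edge and C_{ij} = 0 otherwise). Then μ(k,C) := max{ Tr(C X) : X ∈ I_k } = k − 1. -/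
open Matrix BigOperators Finset ComplexOrder

noncomputable section

lemma aux_psd {n : ℕ} (v : Fin n → ℂ) : (vecMulVec v (star v)).PosSemidef := by
  rw [vecMulVec_eq Unit, ← conjTranspose_replicateCol]
  exact posSemidef_self_mul_conjTranspose _

lemma aux_trace_re {n : ℕ} (v : Fin n → ℂ) :
    (vecMulVec v (star v)).trace.re = ∑ a, Complex.normSq (v a) := by
  simp [Matrix.trace, Matrix.diag, vecMulVec_apply, Complex.re_sum, Complex.mul_conj]

lemma aux_key {n k : ℕ} (G : SimpleGraph (Fin n)) [DecidableRel G.Adj]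
    (v : Fin n → ℂ) (hv : suppCard v ≤ k) :
    ((G.adjMatrix ℂ * vecMulVec v (star v)).trace).re
      ≤ ((k:ℝ) - 1) * ∑ a, Complex.normSq (v a) := by
  set f : Fin n → ℝ := fun a => ‖v a‖ with hf
  have hf0 : ∀ a, 0 ≤ f a := fun a => norm_nonneg _
  have h1 : ((G.adjMatrix ℂ * vecMulVec v (star v)).trace).re
      = ∑ a, ∑ b, ((G.adjMatrix ℂ) a b * (v b * (starRingEnd ℂ) (v a))).re := by
    simp [Matrix.trace, Matrix.diag, Matrix.mul_apply, vecMulVec_apply, Complex.re_sum]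
  have h2 : ∀ a b, ((G.adjMatrix ℂ) a b * (v b * (starRingEnd ℂ) (v a))).re
      ≤ (if a = b then 0 else f a * f b) := by
    intro a b
    by_cases hab : G.Adj a b
    · have hne : a ≠ b := G.ne_of_adj hab
      rw [SimpleGraph.adjMatrix_apply, if_pos hab, one_mul, if_neg hne]
      calc (v b * (starRingEnd ℂ) (v a)).re ≤ ‖v b * (starRingEnd ℂ) (v a)‖ :=
            Complex.re_le_norm _
        _ = f a * f b := by simp [hf, mul_comm]
    · rw [SimpleGraph.adjMatrix_apply, if_neg hab, zero_mul, Complex.zero_re]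
      split
      · exact le_refl _
      · exact mul_nonneg (hf0 a) (hf0 b)
  set S := Finset.univ.filter fun i => v i ≠ 0 with hS
  have hsum : ∑ a ∈ S, f a = ∑ a, f a := by
    apply Finset.sum_subset (Finset.filter_subset _ _)
    intro x _ hx
    simp only [hS, Finset.mem_filter, Finset.mem_univ, true_and, not_not] at hx
    simp [hf, hx]
  have hsq : ∑ a ∈ S, f a ^ 2 ≤ ∑ a, f a ^ 2 :=
    Finset.sum_le_sum_of_subset_of_nonneg (Finset.filter_subset _ _)
      (fun a _ _ => sq_nonneg _)
  have hcs : (∑ a, f a) ^ 2 ≤ (k : ℝ) * ∑ a, f a ^ 2 := by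
    rw [← hsum]
    calc (∑ a ∈ S, f a) ^ 2 ≤ (S.card : ℝ) * ∑ a ∈ S, f a ^ 2 := by
          exact sq_sum_le_card_mul_sum_sq
      _ ≤ (k : ℝ) * ∑ a, f a ^ 2 := by
          apply mul_le_mul (by exact_mod_cast hv) hsq
            (Finset.sum_nonneg fun a _ => sq_nonneg _) (by positivity)
  have hns : ∀ a, Complex.normSq (v a) = f a ^ 2 := fun a => (Complex.sq_norm (v a)).symm
  rw [h1]
  calc ∑ a, ∑ b, ((G.adjMatrix ℂ) a b * (v b * (starRingEnd ℂ) (v a))).re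
      ≤ ∑ a, ∑ b, (if a = b then 0 else f a * f b) :=
        Finset.sum_le_sum fun a _ => Finset.sum_le_sum fun b _ => h2 a b
    _ = (∑ a, f a) ^ 2 - ∑ a, f a ^ 2 := by
        have : ∀ a b : Fin n, (if a = b then (0:ℝ) else f a * f b)
            = f a * f b - (if a = b then f a * f b else 0) := by
          intro a b; split <;> ring
        simp_rw [this, Finset.sum_sub_distrib, ← Finset.mul_sum, ← Finset.sum_mul,
          Finset.sum_ite_eq, Finset.mem_univ, if_true, sq]
    _ ≤ (k : ℝ) * ∑ a, f a ^ 2 - ∑ a, f a ^ 2 := by linarith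
    _ = ((k:ℝ) - 1) * ∑ a, Complex.normSq (v a) := by
        simp_rw [hns]; ring

/-- If a graph on `n` vertices contains a `k`-clique, then the maximum of `Tr(C X)` over
`X ∈ I_k`, where `C` is the adjacency matrix, equals `k - 1` (and is attained). -/
theorem mu_eq_of_clique (n k : ℕ) (hk : 2 ≤ k) (hkn : k ≤ n)
    (G : SimpleGraph (Fin n)) [DecidableRel G.Adj]
    (hclique : ∃ s : Finset (Fin n), G.IsNClique k s) :
    IsGreatest {t : ℝ | ∃ X ∈ Ik n k, t = ((G.adjMatrix ℂ * X).trace).re}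
      ((k : ℝ) - 1) := by
  have hk0 : (0:ℝ) < k := by
    have : (0:ℕ) < k := lt_of_lt_of_le two_pos hk
    exact_mod_cast this
  have hkC : (k:ℂ) ≠ 0 := by exact_mod_cast ne_of_gt (show (0:ℕ) < k from lt_of_lt_of_le two_pos hk)
  constructor
  · -- membership
    obtain ⟨s, hs⟩ := hclique
    have hscard : s.card = k := hs.card_eq
    set c : ℂ := (((Real.sqrt k)⁻¹ : ℝ) : ℂ) with hc
    set v : Fin n → ℂ := fun i => if i ∈ s then c else 0 with hv
    have hsqrt : (0:ℝ) < Real.sqrt k := Real.sqrt_pos.mpr hk0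
    have hc0 : c ≠ 0 := by
      simp only [hc, ne_eq, Complex.ofReal_eq_zero, inv_eq_zero]
      exact ne_of_gt hsqrt
    have hcc : c * (starRingEnd ℂ) c = (((k:ℝ)⁻¹ : ℝ) : ℂ) := by
      rw [hc, Complex.conj_ofReal, ← Complex.ofReal_mul]
      congr 1
      rw [← mul_inv, Real.mul_self_sqrt (le_of_lt hk0)]
    have hnsc : Complex.normSq c = (k:ℝ)⁻¹ := by
      rw [hc, Complex.normSq_ofReal, ← mul_inv, Real.mul_self_sqrt (le_of_lt hk0)]
    set X := vecMulVec v (star v) with hX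
    have hfilter : (Finset.univ.filter fun i => v i ≠ 0) = s := by
      ext i; by_cases hi : i ∈ s <;> simp [hv, hi, hc0]
    refine ⟨X, ⟨aux_psd v, ⟨1, fun _ => v, fun _ => ?_, by simp [hX]⟩, ?_⟩, ?_⟩
    · rw [suppCard, hfilter, hscard]
    · rw [hX, aux_trace_re]
      have : ∀ a : Fin n, Complex.normSq (v a) = if a ∈ s then (k:ℝ)⁻¹ else 0 := by
        intro a; by_cases ha : a ∈ s <;> simp [hv, ha, hnsc]
      simp_rw [this]
      rw [Finset.sum_ite_mem, Finset.univ_inter, Finset.sum_const, hscard, nsmul_eq_mul]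
      rw [mul_inv_cancel₀ (ne_of_gt hk0)]
    · -- value equals k - 1
      have hterm : ∀ a b : Fin n, (G.adjMatrix ℂ) a b * (X b a)
          = if a ∈ s ∧ b ∈ s ∧ a ≠ b then (((k:ℝ)⁻¹ : ℝ) : ℂ) else 0 := by
        intro a b
        have hXba : X b a = v b * (starRingEnd ℂ) (v a) := by
          simp [hX, vecMulVec_apply]
        by_cases hab : a = b
        · subst hab
          simp [SimpleGraph.adjMatrix_apply, G.irrefl]
        by_cases ha : a ∈ s
        · by_cases hb : b ∈ s
          · have hadj : G.Adj a b := hs.1 (Finset.mem_coe.mpr ha) (Finset.mem_coe.mpr hb) hab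
            rw [hXba, SimpleGraph.adjMatrix_apply, if_pos hadj, one_mul]
            rw [if_pos ⟨ha, hb, hab⟩]
            simp only [hv, if_pos ha, if_pos hb]
            exact hcc
          · simp [hXba, hv, hb]
        · simp [hXba, hv, ha]
      have htr : (G.adjMatrix ℂ * X).trace = ∑ a, ∑ b, (G.adjMatrix ℂ) a b * X b a := by
        simp [Matrix.trace, Matrix.diag, Matrix.mul_apply]
      have hin : ∀ a : Fin n, (∑ b, if a ∈ s ∧ b ∈ s ∧ a ≠ b then (((k:ℝ)⁻¹ : ℝ) : ℂ) else 0)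
          = if a ∈ s then ((k:ℂ) - 1) * (((k:ℝ)⁻¹ : ℝ) : ℂ) else 0 := by
        intro a
        by_cases ha : a ∈ s
        · simp only [ha, true_and, if_true]
          have hiff : ∀ b : Fin n, (b ∈ s ∧ a ≠ b) ↔ b ∈ s.erase a := by
            intro b; rw [Finset.mem_erase]; constructor
            · rintro ⟨h1, h2⟩; exact ⟨Ne.symm h2, h1⟩
            · rintro ⟨h1, h2⟩; exact ⟨h2, Ne.symm h1⟩
          have : ∀ b : Fin n, (if b ∈ s ∧ a ≠ b then (((k:ℝ)⁻¹ : ℝ) : ℂ) else 0)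
              = if b ∈ s.erase a then (((k:ℝ)⁻¹ : ℝ) : ℂ) else 0 := fun b =>
            if_congr (hiff b) rfl rfl
          rw [Finset.sum_congr rfl fun b _ => this b, Finset.sum_ite_mem, Finset.univ_inter,
            Finset.sum_const, Finset.card_erase_of_mem ha, hscard, nsmul_eq_mul]
          congr 1
          rw [Nat.cast_sub (le_trans one_le_two hk), Nat.cast_one]
        · simp [ha]
      have hval : (G.adjMatrix ℂ * X).trace = (k:ℂ) - 1 := by
        rw [htr]
        simp_rw [hterm, hin]
        rw [Finset.sum_ite_mem, Finset.univ_inter, Finset.sum_const, hscard, nsmul_eq_mul]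
        push_cast
        field_simp
      rw [hval]
      simp
  · -- upper bound
    rintro t ⟨X, ⟨hX, ⟨m, w, hsupp, hXeq⟩, htr⟩, rfl⟩
    subst hXeq
    rw [Matrix.mul_sum, Matrix.trace_sum, Complex.re_sum]
    have hbound := fun i => aux_key G (w i) (hsupp i)
    have hsum2 : ∑ i, ∑ a, Complex.normSq (w i a) ≤ 1 := by
      have he : (∑ i, vecMulVec (w i) (star (w i))).trace.re
          = ∑ i, ∑ a, Complex.normSq (w i a) := by
        rw [Matrix.trace_sum, Complex.re_sum]
        exact Finset.sum_congr rfl fun i _ => aux_trace_re (w i)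
      rw [← he]; exact htr
    calc ∑ i, ((G.adjMatrix ℂ * vecMulVec (w i) (star (w i))).trace).re
        ≤ ∑ i, ((k:ℝ) - 1) * ∑ a, Complex.normSq (w i a) :=
          Finset.sum_le_sum fun i _ => hbound i
      _ = ((k:ℝ) - 1) * ∑ i, ∑ a, Complex.normSq (w i a) := by rw [Finset.mul_sum]
      _ ≤ ((k:ℝ) - 1) * 1 := by
          apply mul_le_mul_of_nonneg_left hsum2
          have : (1:ℝ) ≤ k := by exact_mod_cast le_trans one_le_two hk
          linarith
      _ = (k:ℝ) - 1 := mul_one _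
end
end
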